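/- Let A, B, C, D be four non-overlapping unit balls in ℝ^d. It is impossible for there to exist both a line transversal meeting them in the order A, B, C, D and a line transversal meeting them in the order B, A, D, C. -/

import Mathlib

open Real

section DistLemma

open RealInnerProductSpace

variable {E : Type*} [NormedAddCommGroup E] [InnerProductSpace ℝ E]

lemma perp_inner (v : E) (hv : ‖v‖ = 1) (p x : E) :
    ⟪x - p - (⟪x - p, v⟫) • v, v⟫ = 0 := by
  have hvv : ⟪v, v⟫ = 1 := by
    rw [real_inner_self_eq_norm_sq, hv]; norm_num
  simp [inner_sub_left, real_inner_smul_left, hvv, hv]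

lemma perp_small (v : E) (hv : ‖v‖ = 1) (p x : E)
    (h : ∃ t : ℝ, dist (p + t • v) x ≤ 1) :
    ‖x - p - (⟪x - p, v⟫) • v‖ ≤ 1 := by
  obtain ⟨t, ht⟩ := h
  set s : ℝ := ⟪x - p, v⟫ with hs
  set y : E := x - p - s • v with hy
  have hyv : ⟪y, v⟫ = 0 := perp_inner v hv p x
  have hvy : ⟪v, y⟫ = 0 := by rw [real_inner_comm]; exact hyv
  have hdecomp : p + t • v - x = (t - s) • v - y := by
    rw [sub_smul, hy]; abel
  have hnorm : dist (p + t • v) x ^ 2 = (t - s) ^ 2 + ‖y‖ ^ 2 := by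
    rw [dist_eq_norm, hdecomp, norm_sub_sq_real, real_inner_smul_left, hvy,
      norm_smul, hv]
    simp [mul_pow, Real.norm_eq_abs, sq_abs]
  have h0 : (0:ℝ) ≤ dist (p + t • v) x := dist_nonneg
  nlinarith only [norm_nonneg y, sq_nonneg (t - s), ht, hnorm, h0]

lemma dist_sq_eq (v : E) (hv : ‖v‖ = 1) (p x y : E) :
    dist x y ^ 2 = ((⟪y - p, v⟫) - ⟪x - p, v⟫) ^ 2 +
      ‖(y - p - (⟪y - p, v⟫) • v) - (x - p - (⟪x - p, v⟫) • v)‖ ^ 2 := by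
  set tx : ℝ := ⟪x - p, v⟫ with htx
  set ty : ℝ := ⟪y - p, v⟫ with hty
  set ξ : E := x - p - tx • v with hξ
  set η : E := y - p - ty • v with hη
  have hξv : ⟪ξ, v⟫ = 0 := perp_inner v hv p x
  have hηv : ⟪η, v⟫ = 0 := perp_inner v hv p y
  have hdecomp : y - x = (ty - tx) • v + (η - ξ) := by
    rw [sub_smul, hη, hξ]; abel
  have hvd : ⟪v, η - ξ⟫ = 0 := by
    rw [real_inner_comm, inner_sub_left, hξv, hηv]; ring
  rw [dist_comm, dist_eq_norm, hdecomp, norm_add_sq_real, real_inner_smul_left, hvd,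
    norm_smul, hv]
  simp [mul_pow, Real.norm_eq_abs, sq_abs]

lemma inner_add_sub_sq (X Y : E) : ⟪X + Y, X - Y⟫ = ‖X‖ ^ 2 - ‖Y‖ ^ 2 := by
  rw [inner_add_left, inner_sub_right, inner_sub_right, real_inner_comm Y X,
    real_inner_self_eq_norm_sq, real_inner_self_eq_norm_sq]
  ring

/-- The Distance Lemma. -/

lemma distance_lemma (v : E) (hv : ‖v‖ = 1) (p a b c e : E)
    (hab : 2 ≤ dist a b) (hac : 2 ≤ dist a c) (hbe : 2 ≤ dist b e) (hce : 2 ≤ dist c e)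
    (hA : ∃ t : ℝ, dist (p + t • v) a ≤ 1)
    (hB : ∃ t : ℝ, dist (p + t • v) b ≤ 1)
    (hC : ∃ t : ℝ, dist (p + t • v) c ≤ 1)
    (hD : ∃ t : ℝ, dist (p + t • v) e ≤ 1)
    (h1 : (⟪a - p, v⟫) < ⟪b - p, v⟫)
    (h2 : (⟪b - p, v⟫) < ⟪c - p, v⟫)
    (h3 : (⟪c - p, v⟫) < ⟪e - p, v⟫) :
    dist b c < dist a e := by
  by_contra hcon
  push_neg at hcon
  have hαn : ‖a - p - (⟪a - p, v⟫) • v‖ ≤ 1 := perp_small v hv p a hA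
  have hβn : ‖b - p - (⟪b - p, v⟫) • v‖ ≤ 1 := perp_small v hv p b hB
  have hγn : ‖c - p - (⟪c - p, v⟫) • v‖ ≤ 1 := perp_small v hv p c hC
  have hεn : ‖e - p - (⟪e - p, v⟫) • v‖ ≤ 1 := perp_small v hv p e hD
  have dab := dist_sq_eq v hv p a b
  have dac := dist_sq_eq v hv p a c
  have dbe := dist_sq_eq v hv p b e
  have dce := dist_sq_eq v hv p c e
  have dbc := dist_sq_eq v hv p b c
  have dae := dist_sq_eq v hv p a e
  set ta : ℝ := ⟪a - p, v⟫ with hta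
  set tb : ℝ := ⟪b - p, v⟫ with htb
  set tc : ℝ := ⟪c - p, v⟫ with htc
  set te : ℝ := ⟪e - p, v⟫ with hte
  set α : E := a - p - ta • v with hα_def
  set β : E := b - p - tb • v with hβ_def
  set γ : E := c - p - tc • v with hγ_def
  set ε : E := e - p - te • v with hε_def
  set u : ℝ := tb - ta with hu_def
  set m : ℝ := tc - tb with hm_def
  set w : ℝ := te - tc with hw_def
  have hu : 0 < u := by rw [hu_def]; exact sub_pos.mpr h1
  have hm : 0 < m := by rw [hm_def]; exact sub_pos.mpr h2
  have hw : 0 < w := by rw [hw_def]; exact sub_pos.mpr h3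
  -- rewrite the projection gaps
  have hac' : tc - ta = u + m := by rw [hu_def, hm_def]; ring
  have hbe' : te - tb = m + w := by rw [hm_def, hw_def]; ring
  have hae' : te - ta = u + m + w := by rw [hu_def, hm_def, hw_def]; ring
  rw [hac'] at dac
  rw [hbe'] at dbe
  rw [hae'] at dae
  -- the four sum vectors
  set s1 : E := α + β with hs1_def
  set s3 : E := γ + ε with hs3_def
  set s4 : E := α + γ with hs4_def
  set s5 : E := β + ε with hs5_def
  clear_value s1 s3 s4 s5
  clear_value ta tb tc te α β γ ε u m w
  clear hA hB hC hD h1 h2 h3 hta htb htc hte hα_def hβ_def hγ_def hε_def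
  -- parallelogram-type exact identities
  have par1 : ‖s1‖ ^ 2 + ‖β - α‖ ^ 2 = 2 * ‖α‖ ^ 2 + 2 * ‖β‖ ^ 2 := by
    have e1 := norm_add_sq_real α β
    have e2 := norm_sub_sq_real β α
    have e3 : ⟪β, α⟫ = ⟪α, β⟫ := real_inner_comm α β
    rw [hs1_def]; linarith only [e1, e2, e3]
  have par3 : ‖s3‖ ^ 2 + ‖ε - γ‖ ^ 2 = 2 * ‖γ‖ ^ 2 + 2 * ‖ε‖ ^ 2 := by
    have e1 := norm_add_sq_real γ ε
    have e2 := norm_sub_sq_real ε γ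
    have e3 : ⟪ε, γ⟫ = ⟪γ, ε⟫ := real_inner_comm γ ε
    rw [hs3_def]; linarith only [e1, e2, e3]
  have par4 : ‖s4‖ ^ 2 + ‖γ - α‖ ^ 2 = 2 * ‖α‖ ^ 2 + 2 * ‖γ‖ ^ 2 := by
    have e1 := norm_add_sq_real α γ
    have e2 := norm_sub_sq_real γ α
    have e3 : ⟪γ, α⟫ = ⟪α, γ⟫ := real_inner_comm α γ
    rw [hs4_def]; linarith only [e1, e2, e3]
  have par5 : ‖s5‖ ^ 2 + ‖ε - β‖ ^ 2 = 2 * ‖β‖ ^ 2 + 2 * ‖ε‖ ^ 2 := by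
    have e1 := norm_add_sq_real β ε
    have e2 := norm_sub_sq_real ε β
    have e3 : ⟪ε, β⟫ = ⟪β, ε⟫ := real_inner_comm β ε
    rw [hs5_def]; linarith only [e1, e2, e3]
  -- squared distance lower bounds
  have hab2 : 4 ≤ dist a b ^ 2 := by
    have h := pow_le_pow_left₀ (by norm_num : (0:ℝ) ≤ 2) hab 2
    norm_num at h; linarith only [h]
  have hac2 : 4 ≤ dist a c ^ 2 := by
    have h := pow_le_pow_left₀ (by norm_num : (0:ℝ) ≤ 2) hac 2
    norm_num at h; linarith only [h]
  have hbe2 : 4 ≤ dist b e ^ 2 := by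
    have h := pow_le_pow_left₀ (by norm_num : (0:ℝ) ≤ 2) hbe 2
    norm_num at h; linarith only [h]
  have hce2 : 4 ≤ dist c e ^ 2 := by
    have h := pow_le_pow_left₀ (by norm_num : (0:ℝ) ≤ 2) hce 2
    norm_num at h; linarith only [h]
  -- squared norm bounds on perpendicular parts
  have hPa2 : ‖α‖ ^ 2 ≤ 1 := by
    calc ‖α‖ ^ 2 ≤ 1 ^ 2 := by nlinarith only [hαn, norm_nonneg α]
    _ = 1 := one_pow 2
  have hPb2 : ‖β‖ ^ 2 ≤ 1 := by
    calc ‖β‖ ^ 2 ≤ 1 ^ 2 := by nlinarith only [hβn, norm_nonneg β]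
    _ = 1 := one_pow 2
  have hPg2 : ‖γ‖ ^ 2 ≤ 1 := by
    calc ‖γ‖ ^ 2 ≤ 1 ^ 2 := by nlinarith only [hγn, norm_nonneg γ]
    _ = 1 := one_pow 2
  have hPe2 : ‖ε‖ ^ 2 ≤ 1 := by
    calc ‖ε‖ ^ 2 ≤ 1 ^ 2 := by nlinarith only [hεn, norm_nonneg ε]
    _ = 1 := one_pow 2
  -- norm bounds on the sum vectors
  have hN1 : ‖s1‖ ≤ u := by
    have hsq' : ‖s1‖ ^ 2 ≤ (u) ^ 2 := by
      linarith only [par1, dab, hab2, hPa2, hPb2]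
    nlinarith only [norm_nonneg s1, hu, hm, hw, hsq']
  have hN3 : ‖s3‖ ≤ w := by
    have hsq' : ‖s3‖ ^ 2 ≤ (w) ^ 2 := by
      linarith only [par3, dce, hce2, hPg2, hPe2]
    nlinarith only [norm_nonneg s3, hu, hm, hw, hsq']
  have hN4 : ‖s4‖ ≤ u + m := by
    have hsq' : ‖s4‖ ^ 2 ≤ (u + m) ^ 2 := by
      linarith only [par4, dac, hac2, hPa2, hPg2]
    nlinarith only [norm_nonneg s4, hu, hm, hw, hsq']
  have hN5 : ‖s5‖ ≤ m + w := by
    have hsq' : ‖s5‖ ^ 2 ≤ (m + w) ^ 2 := by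
      linarith only [par5, dbe, hbe2, hPb2, hPe2]
    nlinarith only [norm_nonneg s5, hu, hm, hw, hsq']
  -- the key inner product identity
  have hX : s3 - s1 = (ε - α) + (γ - β) := by rw [hs1_def, hs3_def]; abel
  have hY : s5 - s4 = (ε - α) - (γ - β) := by rw [hs4_def, hs5_def]; abel
  have hip : ⟪s3 - s1, s5 - s4⟫ = ‖ε - α‖ ^ 2 - ‖γ - β‖ ^ 2 := by
    rw [hX, hY, inner_add_sub_sq]
  -- consequence of the contradiction hypothesis
  have hsq : dist a e ^ 2 ≤ dist b c ^ 2 := by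
    have h := pow_le_pow_left₀ (dist_nonneg (x := a) (y := e)) hcon 2
    linarith
  have hKneg : ⟪s3 - s1, s5 - s4⟫ ≤ -((u + w) * (u + 2*m + w)) := by
    rw [hip]; nlinarith only [dae, dbc, hsq]
  -- Cauchy–Schwarz and tightness
  have hCSabs := abs_real_inner_le_norm (s3 - s1) (s5 - s4)
  have hCS : -(‖s3 - s1‖ * ‖s5 - s4‖) ≤ ⟪s3 - s1, s5 - s4⟫ := by
    have h := neg_abs_le (⟪s3 - s1, s5 - s4⟫)
    linarith only [h, hCSabs]
  have hAle : ‖s3 - s1‖ ≤ u + w := by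
    have h := norm_sub_le s3 s1; linarith only [h, hN1, hN3]
  have hBle : ‖s5 - s4‖ ≤ u + 2*m + w := by
    have h := norm_sub_le s5 s4; linarith only [h, hN4, hN5]
  have hApos : (0:ℝ) ≤ ‖s3 - s1‖ := norm_nonneg _
  have hBpos : (0:ℝ) ≤ ‖s5 - s4‖ := norm_nonneg _
  have hprod : (u + w) * (u + 2*m + w) ≤ ‖s3 - s1‖ * ‖s5 - s4‖ := by linarith only [hCS, hKneg]
  have hAeq : ‖s3 - s1‖ = u + w := by
    have h1' : (u + w) * (u + 2*m + w) ≤ ‖s3 - s1‖ * (u + 2*m + w) :=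
      le_trans hprod (mul_le_mul_of_nonneg_left hBle hApos)
    have h2' : u + w ≤ ‖s3 - s1‖ := le_of_mul_le_mul_right h1' (by linarith)
    exact le_antisymm hAle h2'
  have hBeq : ‖s5 - s4‖ = u + 2*m + w := by
    rw [hAeq] at hprod
    have h2' : u + 2*m + w ≤ ‖s5 - s4‖ := le_of_mul_le_mul_left hprod (by linarith)
    exact le_antisymm hBle h2'
  have hipeq : ⟪s3 - s1, s5 - s4⟫ = -((u + w) * (u + 2*m + w)) := by
    rw [hAeq, hBeq] at hCS
    linarith only [hCS, hKneg]
  -- tightness of individual norms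
  have hN1e : ‖s1‖ = u := by
    have h := norm_sub_le s3 s1
    rw [hAeq] at h
    have : u ≤ ‖s1‖ := by linarith only [h, hN3]
    exact le_antisymm hN1 this
  have hN3e : ‖s3‖ = w := by
    have h := norm_sub_le s3 s1
    rw [hAeq] at h
    have : w ≤ ‖s3‖ := by linarith only [h, hN1]
    exact le_antisymm hN3 this
  have hN4e : ‖s4‖ = u + m := by
    have h := norm_sub_le s5 s4
    rw [hBeq] at h
    have : u + m ≤ ‖s4‖ := by linarith only [h, hN5]
    exact le_antisymm hN4 this
  have hN5e : ‖s5‖ = m + w := by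
    have h := norm_sub_le s5 s4
    rw [hBeq] at h
    have : m + w ≤ ‖s5‖ := by linarith only [h, hN4]
    exact le_antisymm hN5 this
  -- inner products among the sum vectors
  have hg13 : ⟪s1, s3⟫ = -(u*w) := by
    have h := norm_sub_sq_real s3 s1
    rw [hAeq, hN3e, hN1e, real_inner_comm s1 s3] at h
    nlinarith only [h]
  have hg45 : ⟪s4, s5⟫ = -((u+m)*(m+w)) := by
    have h := norm_sub_sq_real s5 s4
    rw [hBeq, hN5e, hN4e, real_inner_comm s4 s5] at h
    nlinarith only [h]
  -- vector equalities from Cauchy–Schwarz equality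
  have hz1 : w • s1 + u • s3 = 0 := by
    have hsq0 : ‖w • s1 + u • s3‖ ^ 2 = 0 := by
      rw [norm_add_sq_real, real_inner_smul_left, real_inner_smul_right, hg13,
        norm_smul, norm_smul, Real.norm_eq_abs, Real.norm_eq_abs,
        abs_of_pos hw, abs_of_pos hu, hN1e, hN3e]
      ring
    have := pow_eq_zero_iff (n := 2) (by norm_num) |>.mp hsq0
    exact norm_eq_zero.mp this
  have hz2 : (m+w) • s4 + (u+m) • s5 = 0 := by
    have hsq0 : ‖(m+w) • s4 + (u+m) • s5‖ ^ 2 = 0 := by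
      rw [norm_add_sq_real, real_inner_smul_left, real_inner_smul_right, hg45,
        norm_smul, norm_smul, Real.norm_eq_abs, Real.norm_eq_abs,
        abs_of_pos (by linarith : (0:ℝ) < m+w), abs_of_pos (by linarith : (0:ℝ) < u+m),
        hN4e, hN5e]
      ring
    have := pow_eq_zero_iff (n := 2) (by norm_num) |>.mp hsq0
    exact norm_eq_zero.mp this
  have hz3 : (u+2*m+w) • (s3 - s1) + (u+w) • (s5 - s4) = 0 := by
    have hsq0 : ‖(u+2*m+w) • (s3 - s1) + (u+w) • (s5 - s4)‖ ^ 2 = 0 := by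
      rw [norm_add_sq_real, real_inner_smul_left, real_inner_smul_right, hipeq,
        norm_smul, norm_smul, Real.norm_eq_abs, Real.norm_eq_abs,
        abs_of_pos (by linarith : (0:ℝ) < u+2*m+w), abs_of_pos (by linarith : (0:ℝ) < u+w),
        hAeq, hBeq]
      ring
    have := pow_eq_zero_iff (n := 2) (by norm_num) |>.mp hsq0
    exact norm_eq_zero.mp this
  -- tightness forces unit perpendicular components
  have hN1sq : ‖s1‖ ^ 2 = u ^ 2 := by rw [hN1e]
  have hN4sq : ‖s4‖ ^ 2 = (u+m) ^ 2 := by rw [hN4e]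
  have hPa : ‖α‖ ^ 2 = 1 := by linarith only [par1, dab, hab2, hN1sq, hPa2, hPb2]
  have hPb : ‖β‖ ^ 2 = 1 := by linarith only [par1, dab, hab2, hN1sq, hPa2, hPb2]
  have hPg : ‖γ‖ ^ 2 = 1 := by linarith only [par4, dac, hac2, hN4sq, hPa2, hPg2]
  -- inner products with α
  have hbeta : s1 - α = β := by rw [hs1_def]; abel
  have hgamma : s4 - α = γ := by rw [hs4_def]; abel
  have hg1 : ⟪s1, α⟫ = u ^ 2 / 2 := by
    have h := norm_sub_sq_real s1 α
    rw [hbeta, hN1e] at h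
    linarith only [h, hPa, hPb]
  have hg4 : ⟪s4, α⟫ = (u+m) ^ 2 / 2 := by
    have h := norm_sub_sq_real s4 α
    rw [hgamma, hN4e] at h
    linarith only [h, hPa, hPg]
  -- scalar linear equations
  have e1 : w * ⟪s1, α⟫ + u * ⟪s3, α⟫ = 0 := by
    have h : ⟪w • s1 + u • s3, α⟫ = (0:ℝ) := by rw [hz1, inner_zero_left]
    rwa [inner_add_left, real_inner_smul_left, real_inner_smul_left] at h
  have e2 : (m+w) * ⟪s4, α⟫ + (u+m) * ⟪s5, α⟫ = 0 := by
    have h : ⟪(m+w) • s4 + (u+m) • s5, α⟫ = (0:ℝ) := by rw [hz2, inner_zero_left]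
    rwa [inner_add_left, real_inner_smul_left, real_inner_smul_left] at h
  have e3 : (u+2*m+w) * (⟪s3, α⟫ - ⟪s1, α⟫) + (u+w) * (⟪s5, α⟫ - ⟪s4, α⟫) = 0 := by
    have h : ⟪(u+2*m+w) • (s3 - s1) + (u+w) • (s5 - s4), α⟫ = (0:ℝ) := by
      rw [hz3, inner_zero_left]
    rwa [inner_add_left, real_inner_smul_left, real_inner_smul_left,
      inner_sub_left, inner_sub_left] at h
  -- the final contradiction
  have final : (u+w) * (u+2*m+w) * ((u+m) * ⟪s1, α⟫ + u * ⟪s4, α⟫) = 0 := by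
    linear_combination ((u+m)*(u+2*m+w)) * e1 + (u*(u+w)) * e2 - (u*(u+m)) * e3
  rw [hg1, hg4] at final
  have p1 : (0:ℝ) < u + w := by linarith only [hu, hw]
  have p2 : (0:ℝ) < u + 2*m + w := by linarith only [hu, hm, hw]
  have p31 : (0:ℝ) < u * u * (u + m) := by positivity
  have p32 : (0:ℝ) < u * ((u + m) * (u + m)) := by positivity
  have p3 : (0:ℝ) < (u+m) * (u ^ 2 / 2) + u * ((u+m) ^ 2 / 2) := by
    nlinarith only [p31, p32]
  have hpos := mul_pos (mul_pos p1 p2) p3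
  linarith only [final, hpos]

end DistLemma

/-- four non-overlapping unit balls cannot admit both a line transversal in the
order `A B C D` and one in the order `B A D C`. -/
theorem no_ABCD_and_BADC {d : ℕ} (a b c e : EuclideanSpace ℝ (Fin d))
    (hab : 2 ≤ dist a b) (hac : 2 ≤ dist a c) (hae : 2 ≤ dist a e)
    (hbc : 2 ≤ dist b c) (hbe : 2 ≤ dist b e) (hce : 2 ≤ dist c e)
    (p v : EuclideanSpace ℝ (Fin d)) (hv : ‖v‖ = 1)
    (hA : ∃ t : ℝ, dist (p + t • v) a ≤ 1)
    (hB : ∃ t : ℝ, dist (p + t • v) b ≤ 1)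
    (hC : ∃ t : ℝ, dist (p + t • v) c ≤ 1)
    (hD : ∃ t : ℝ, dist (p + t • v) e ≤ 1)
    (hord1 : (inner ℝ (a - p) v : ℝ) < inner ℝ (b - p) v)
    (hord2 : (inner ℝ (b - p) v : ℝ) < inner ℝ (c - p) v)
    (hord3 : (inner ℝ (c - p) v : ℝ) < inner ℝ (e - p) v)
    (q w : EuclideanSpace ℝ (Fin d)) (hw : ‖w‖ = 1)
    (hA' : ∃ t : ℝ, dist (q + t • w) a ≤ 1)
    (hB' : ∃ t : ℝ, dist (q + t • w) b ≤ 1)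
    (hC' : ∃ t : ℝ, dist (q + t • w) c ≤ 1)
    (hD' : ∃ t : ℝ, dist (q + t • w) e ≤ 1)
    (hord1' : (inner ℝ (b - q) w : ℝ) < inner ℝ (a - q) w)
    (hord2' : (inner ℝ (a - q) w : ℝ) < inner ℝ (e - q) w)
    (hord3' : (inner ℝ (e - q) w : ℝ) < inner ℝ (c - q) w) :
    False := by
  have L1 : dist b c < dist a e :=
    distance_lemma v hv p a b c e hab hac hbe hce hA hB hC hD hord1 hord2 hord3
  have L2 : dist a e < dist b c := by
    have h1 : 2 ≤ dist b a := by rwa [dist_comm]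
    have h2 : 2 ≤ dist e c := by rwa [dist_comm]
    exact distance_lemma w hw q b a e c h1 hbe hac h2 hB' hA' hD' hC' hord1' hord2' hord3'
  linarith
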